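/- Let L be a finite modular lattice viewed as the closure system of sets J(x) ⊆ J(L), and let Λ be a base of lines of L. Then a subset X ⊆ J(L) is of the form J(x) for some x ∈ L if and only if X is an order ideal of the poset (J(L), ≤) and X is Λ-closed, i.e., for every line l ∈ Λ, if |X ∩ l| ≥ 2 then J(⋁l) ⊆ X. -/
import Mathlib

section AuxLemmas

variable {L : Type*} [Lattice L] [IsModularLattice L]

/-- Key modular-lattice lemma: if `r` is sup-irreducible with `r ⊔ d = t`, and
`Y, Z` lie in the interval `[d, t]` with `Y ⊔ Z = t`, then `Y = t` or `Z = t`.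
(Equivalently, `t` is join-irreducible in the quotient interval `[d, t]`.) -/
lemma supIrred_key {r d t Y Z : L} (hr : SupIrred r) (hrd : r ⊔ d = t)
    (hdY : d ≤ Y) (hdZ : d ≤ Z) (hYt : Y ≤ t) (hZt : Z ≤ t) (hYZ : Y ⊔ Z = t) :
    Y = t ∨ Z = t := by
  have hrt : r ≤ t := hrd ▸ le_sup_left
  have hZr : d ⊔ r ⊓ Z = Z := by
    have h := sup_inf_assoc_of_le (x := d) r hdZ
    rw [sup_comm d r, hrd, inf_eq_right.mpr hZt] at h
    exact h.symm
  have hE : Z ⊓ r ⊔ Y = t := by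
    apply le_antisymm (sup_le (inf_le_right.trans hrt) hYt)
    have h1 : Z ≤ Z ⊓ r ⊔ Y := by
      conv_lhs => rw [← hZr]
      exact sup_le (hdY.trans le_sup_right)
        ((inf_comm r Z ▸ le_sup_left : r ⊓ Z ≤ Z ⊓ r ⊔ Y))
    calc t = Y ⊔ Z := hYZ.symm
    _ ≤ Z ⊓ r ⊔ Y := sup_le le_sup_right h1
  have hkey : Z ⊓ r ⊔ Y ⊓ r = r := by
    have h := sup_inf_assoc_of_le (x := Z ⊓ r) Y (inf_le_right : Z ⊓ r ≤ r)
    rw [hE, inf_eq_right.mpr hrt] at h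
    exact h.symm
  have := hr.2 hkey
  rcases this with h | h
  · right
    have hrZ : r ≤ Z := h ▸ inf_le_left
    exact le_antisymm hZt (hrd ▸ sup_le hrZ hdZ)
  · left
    have hrY : r ≤ Y := h ▸ inf_le_left
    exact le_antisymm hYt (hrd ▸ sup_le hrY hdY)

end AuxLemmas

/-- A line of a finite lattice with bottom: a set `l` of join-irreducibles with
`|l| ≥ 3`, maximal with respect to the property that `p ⊔ q = ⋁l` for all
distinct `p, q ∈ l`. -/
def IsLine {β : Type*} [Lattice β] [OrderBot β] (l : Finset β) : Prop :=
  (∀ p ∈ l, SupIrred p) ∧ 3 ≤ l.card ∧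
  (∀ p ∈ l, ∀ q ∈ l, p ≠ q → p ⊔ q = l.sup id) ∧
  ∀ l' : Finset β, l ⊆ l' → (∀ p ∈ l', SupIrred p) →
    (∀ p ∈ l', ∀ q ∈ l', p ≠ q → p ⊔ q = l'.sup id) → l' = l

/-- Let `L` be a finite modular lattice and `Λ` a base of lines of `L`
(a set of lines containing, for each line top, exactly one line with that join).
Then `X ⊆ J(L)` is of the form `J(x)` iff `X` is an order ideal of `(J(L), ≤)` and
`X` is `Λ`-closed: for each `l ∈ Λ`, if `X` contains two distinct points of `l`
then `J(⋁l) ⊆ X`. -/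
theorem stmt_17 {L : Type*} [Lattice L] [OrderBot L] [Fintype L] [IsModularLattice L]
    (Λ : Set (Finset L)) (hΛ : ∀ l ∈ Λ, IsLine l)
    (hbase : ∀ l' : Finset L, IsLine l' → ∃! l, l ∈ Λ ∧ l.sup id = l'.sup id)
    (X : Set L) (hX : X ⊆ {p | SupIrred p}) :
    (∃ x : L, X = {p | SupIrred p ∧ p ≤ x}) ↔
      ((∀ p ∈ X, ∀ q : L, SupIrred q → q ≤ p → q ∈ X) ∧
       (∀ l ∈ Λ, ∀ p ∈ l, ∀ q ∈ l, p ≠ q → p ∈ X → q ∈ X →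
         ∀ r : L, SupIrred r → r ≤ l.sup id → r ∈ X)) := by
  classical
  constructor
  · rintro ⟨x, rfl⟩
    constructor
    · rintro p ⟨_, hp2⟩ q hq1 hq2
      exact ⟨hq1, hq2.trans hp2⟩
    · intro l hl p hpl q hql hpq hpX hqX r hr hrle
      have hsup := (hΛ l hl).2.2.1 p hpl q hql hpq
      exact ⟨hr, hrle.trans (hsup ▸ sup_le hpX.2 hqX.2)⟩
  · rintro ⟨hIdeal, hLines⟩
    -- `good g` means all join-irreducibles below `g` belong to `X`.
    set good : L → Prop := fun g => ∀ p : L, SupIrred p → p ≤ g → p ∈ X with hgood_def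
    have good_mono : ∀ {g g' : L}, g' ≤ g → good g → good g' :=
      fun h hg p hp hple => hg p hp (hple.trans h)
    have good_of_X : ∀ s ∈ X, good s := fun s hs p hp hple => hIdeal s hs p hp hple
    -- every good element is a sup of elements of `X`
    have good_spanned : ∀ g : L, good g → ∃ S : Finset L, (∀ s ∈ S, s ∈ X) ∧ S.sup id = g := by
      intro g hg
      obtain ⟨s, hsup, hirr⟩ := exists_supIrred_decomposition g
      exact ⟨s, fun b hb => hg b (hirr hb) (hsup ▸ Finset.le_sup (f := id) hb), hsup⟩
    -- MAIN LEMMA: every sup of elements of `X` is good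
    have main : ∀ t : L, (∃ S : Finset L, (∀ s ∈ S, s ∈ X) ∧ S.sup id = t) → good t := by
      intro t
      induction t using WellFoundedLT.induction with
      | _ t IH =>
      rintro ⟨S, hSX, hSt⟩ r hr hrt
      by_contra hrX
      -- joins of good elements strictly below t are good
      have good_sup_lt : ∀ c d : L, good c → good d → c ⊔ d < t → good (c ⊔ d) := by
        intro c d hc hd hlt
        obtain ⟨Sc, hSc, hScsup⟩ := good_spanned c hc
        obtain ⟨Sd, hSd, hSdsup⟩ := good_spanned d hd
        refine IH _ hlt ⟨Sc ∪ Sd, ?_, ?_⟩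
        · intro s hs
          rcases Finset.mem_union.mp hs with h | h
          · exact hSc s h
          · exact hSd s h
        · rw [Finset.sup_union, hScsup, hSdsup]
      -- find a starting good pair (s₀, d₀) with join t
      obtain ⟨S', hS'mem, hS'min⟩ := Finset.exists_min_image
        (S.powerset.filter fun T => r ≤ T.sup id) Finset.card
        ⟨S, Finset.mem_filter.mpr ⟨Finset.mem_powerset_self S, hSt ▸ hrt⟩⟩
      rw [Finset.mem_filter, Finset.mem_powerset] at hS'mem
      obtain ⟨hS'S, hrS'⟩ := hS'mem
      have hS'le : S'.sup id ≤ t := hSt ▸ Finset.sup_mono hS'S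
      have hS't : S'.sup id = t := by
        by_contra hne
        exact hrX (IH _ (lt_of_le_of_ne hS'le hne)
          ⟨S', fun s hs => hSX s (hS'S hs), rfl⟩ r hr hrS')
      have hS'ne : S'.Nonempty := by
        rcases S'.eq_empty_or_nonempty with h | h
        · exfalso
          rw [h, Finset.sup_empty] at hrS'
          exact hr.1 (le_bot_iff.mp hrS' ▸ isMin_bot)
        · exact h
      obtain ⟨s₀, hs₀⟩ := hS'ne
      set d₀ : L := (S'.erase s₀).sup id with hd₀def
      have hsplit : s₀ ⊔ d₀ = t := by
        rw [← hS't]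
        conv_rhs => rw [← Finset.insert_erase hs₀]
        rw [Finset.sup_insert]
        rfl
      have hd₀le : d₀ ≤ t := hS't ▸ Finset.sup_mono (Finset.erase_subset _ _)
      have hd₀lt : d₀ < t := by
        apply lt_of_le_of_ne hd₀le
        intro heq
        have hmem : S'.erase s₀ ∈ S.powerset.filter fun T => r ≤ T.sup id :=
          Finset.mem_filter.mpr ⟨Finset.mem_powerset.mpr
            ((Finset.erase_subset _ _).trans hS'S), by rw [← hd₀def, heq]; exact hrt⟩
        have := hS'min _ hmem
        have hlt := Finset.card_erase_lt_of_mem hs₀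
        omega
      have hgood_d₀ : good d₀ :=
        IH _ hd₀lt ⟨S'.erase s₀, fun s hs => hSX s (hS'S (Finset.erase_subset _ _ hs)), rfl⟩
      have hgood_s₀ : good s₀ := good_of_X s₀ (hSX s₀ (hS'S hs₀))
      have hs₀le : s₀ ≤ t := hS't ▸ Finset.le_sup (f := id) hs₀
      -- minimal good pair
      set P : Set (L × L) := {cd | good cd.1 ∧ good cd.2 ∧ cd.1 ≤ t ∧ cd.2 ≤ t ∧ r ≤ cd.1 ⊔ cd.2}
        with hPdef
      have hPne : P.Nonempty := ⟨(s₀, d₀), hgood_s₀, hgood_d₀, hs₀le, hd₀le, hsplit ▸ hrt⟩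
      obtain ⟨⟨c₁, d₁⟩, hP₁, hPmin⟩ :=
        (Finite.to_wellFoundedLT (α := L × L)).wf.has_min P hPne
      obtain ⟨hgc₁, hgd₁, hc₁t, hd₁t, hrcd⟩ := hP₁
      -- minimality in usable form
      have hP_eq : ∀ c' d' : L, good c' → good d' → c' ≤ c₁ → d' ≤ d₁ → r ≤ c' ⊔ d' →
          c' = c₁ ∧ d' = d₁ := by
        intro c' d' hgc' hgd' hc' hd' hr'
        have hmem : (c', d') ∈ P := ⟨hgc', hgd', hc'.trans hc₁t, hd'.trans hd₁t, hr'⟩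
        have hle : (c', d') ≤ (c₁, d₁) := Prod.mk_le_mk.mpr ⟨hc', hd'⟩
        have : (c', d') = (c₁, d₁) := by
          by_contra hne
          exact hPmin _ hmem (lt_of_le_of_ne hle hne)
        exact ⟨congrArg Prod.fst this, congrArg Prod.snd this⟩
      -- the join of the minimal pair is t
      have ht₁ : c₁ ⊔ d₁ = t := by
        by_contra hne
        exact hrX (good_sup_lt c₁ d₁ hgc₁ hgd₁
          (lt_of_le_of_ne (sup_le hc₁t hd₁t) hne) r hr hrcd)
      have hrnc : ¬ r ≤ c₁ := fun h => hrX (hgc₁ r hr h)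
      have hrnd : ¬ r ≤ d₁ := fun h => hrX (hgd₁ r hr h)
      -- triangle relations
      have hd₁cr : d₁ ≤ c₁ ⊔ r := by
        have hmod := sup_inf_assoc_of_le (x := c₁) d₁ (le_sup_left : c₁ ≤ c₁ ⊔ r)
        have hr' : r ≤ c₁ ⊔ d₁ ⊓ (c₁ ⊔ r) :=
          hmod ▸ le_inf (ht₁ ▸ hrt) le_sup_right
        have := (hP_eq c₁ (d₁ ⊓ (c₁ ⊔ r)) hgc₁
          (good_mono inf_le_left hgd₁) le_rfl inf_le_left hr').2
        exact this ▸ inf_le_right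
      have hc₁dr : c₁ ≤ d₁ ⊔ r := by
        have hmod := sup_inf_assoc_of_le (x := d₁) c₁ (le_sup_left : d₁ ≤ d₁ ⊔ r)
        have hr' : r ≤ (c₁ ⊓ (d₁ ⊔ r)) ⊔ d₁ := by
          rw [sup_comm]
          exact hmod ▸ le_inf (by rw [sup_comm d₁ c₁, ht₁]; exact hrt) le_sup_right
        have := (hP_eq (c₁ ⊓ (d₁ ⊔ r)) d₁ (good_mono inf_le_left hgc₁)
          hgd₁ inf_le_left le_rfl hr').1
        exact this ▸ inf_le_right
      have htrc : r ⊔ c₁ = t := by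
        apply le_antisymm (sup_le hrt hc₁t)
        rw [← ht₁]
        exact sup_le le_sup_right (hd₁cr.trans (sup_comm c₁ r).le)
      have htrd : r ⊔ d₁ = t := by
        apply le_antisymm (sup_le hrt hd₁t)
        rw [← ht₁]
        exact sup_le (hc₁dr.trans (sup_comm d₁ r).le) le_sup_right
      -- the minimal pair consists of join-irreducibles
      have hsc₁ : SupIrred c₁ := by
        constructor
        · intro hmin
          have hbot : c₁ = ⊥ := hmin.eq_bot
          rw [hbot, bot_sup_eq] at ht₁
          exact hrnd (ht₁ ▸ hrt)
        · intro u v huv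
          by_contra hcon
          push_neg at hcon
          obtain ⟨hu, hv⟩ := hcon
          have hult : u < c₁ := lt_of_le_of_ne (huv ▸ le_sup_left) hu
          have hvlt : v < c₁ := lt_of_le_of_ne (huv ▸ le_sup_right) hv
          have hYZ : (u ⊔ d₁) ⊔ (v ⊔ d₁) = t := by
            rw [sup_sup_sup_comm, huv, sup_idem, ht₁]
          rcases supIrred_key hr htrd (le_sup_right : d₁ ≤ u ⊔ d₁)
            (le_sup_right : d₁ ≤ v ⊔ d₁) (sup_le (hult.le.trans hc₁t) hd₁t)
            (sup_le (hvlt.le.trans hc₁t) hd₁t) hYZ with h | h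
          · exact hult.ne ((hP_eq u d₁ (good_mono hult.le hgc₁) hgd₁ hult.le le_rfl
              (h ▸ hrt)).1)
          · exact hvlt.ne ((hP_eq v d₁ (good_mono hvlt.le hgc₁) hgd₁ hvlt.le le_rfl
              (h ▸ hrt)).1)
      have hsd₁ : SupIrred d₁ := by
        constructor
        · intro hmin
          have hbot : d₁ = ⊥ := hmin.eq_bot
          rw [hbot, sup_bot_eq] at ht₁
          exact hrnc (ht₁ ▸ hrt)
        · intro u v huv
          by_contra hcon
          push_neg at hcon
          obtain ⟨hu, hv⟩ := hcon
          have hult : u < d₁ := lt_of_le_of_ne (huv ▸ le_sup_left) hu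
          have hvlt : v < d₁ := lt_of_le_of_ne (huv ▸ le_sup_right) hv
          have hYZ : (u ⊔ c₁) ⊔ (v ⊔ c₁) = t := by
            rw [sup_sup_sup_comm, huv, sup_idem, sup_comm d₁ c₁, ht₁]
          rcases supIrred_key hr htrc (le_sup_right : c₁ ≤ u ⊔ c₁)
            (le_sup_right : c₁ ≤ v ⊔ c₁) (sup_le (hult.le.trans hd₁t) hc₁t)
            (sup_le (hvlt.le.trans hd₁t) hc₁t) hYZ with h | h
          · refine hult.ne ((hP_eq c₁ u hgc₁ (good_mono hult.le hgd₁) le_rfl hult.le ?_).2)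
            rw [sup_comm]; exact h ▸ hrt
          · refine hvlt.ne ((hP_eq c₁ v hgc₁ (good_mono hvlt.le hgd₁) le_rfl hvlt.le ?_).2)
            rw [sup_comm]; exact h ▸ hrt
      have hc₁X : c₁ ∈ X := hgc₁ c₁ hsc₁ le_rfl
      have hd₁X : d₁ ∈ X := hgd₁ d₁ hsd₁ le_rfl
      have hcd_ne : c₁ ≠ d₁ := by
        intro h
        rw [← h, sup_idem] at ht₁
        exact hrnc (ht₁ ▸ hrt)
      have hrc_ne : r ≠ c₁ := fun h => hrX (h ▸ hc₁X)
      have hrd_ne : r ≠ d₁ := fun h => hrX (h ▸ hd₁X)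
      -- build a line containing {c₁, d₁, r}
      set base : Finset L := {c₁, d₁, r} with hbase_def
      have hbase_mem : ∀ p : L, p ∈ base ↔ p = c₁ ∨ p = d₁ ∨ p = r := by
        intro p
        simp [hbase_def]
      have hbase_sup : base.sup id = t := by
        rw [hbase_def]
        simp only [Finset.sup_insert, Finset.sup_singleton, id]
        rw [sup_comm d₁ r, htrd]
        exact sup_eq_right.mpr hc₁t
      have hbase_irr : ∀ p ∈ base, SupIrred p := by
        intro p hp
        rcases (hbase_mem p).mp hp with h | h | h
        · exact h ▸ hsc₁
        · exact h ▸ hsd₁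
        · exact h ▸ hr
      have hbase_pair : ∀ p ∈ base, ∀ q ∈ base, p ≠ q → p ⊔ q = base.sup id := by
        intro p hp q hq hpq
        rw [hbase_sup]
        rcases (hbase_mem p).mp hp with h1 | h1 | h1 <;>
          rcases (hbase_mem q).mp hq with h2 | h2 | h2 <;>
            subst h1 <;> subst h2 <;> first
              | exact absurd rfl hpq
              | exact ht₁
              | exact (sup_comm _ _).trans ht₁
              | exact (sup_comm _ _).trans htrc
              | exact (sup_comm _ _).trans htrd
              | exact htrc
              | exact htrd
      have hbase_card : base.card = 3 := by
        rw [hbase_def]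
        rw [Finset.card_insert_of_notMem (by simp [hcd_ne, Ne.symm hrc_ne, hrc_ne]),
          Finset.card_insert_of_notMem (by simp [Ne.symm hrd_ne, hrd_ne]),
          Finset.card_singleton]
      -- maximal clique containing base
      haveI : DecidablePred (fun l' : Finset L => base ⊆ l' ∧ (∀ p ∈ l', SupIrred p) ∧
          ∀ p ∈ l', ∀ q ∈ l', p ≠ q → p ⊔ q = l'.sup id) := fun _ => Classical.propDecidable _
      set cand : Finset (Finset L) := Finset.univ.filter (fun l' : Finset L =>
        base ⊆ l' ∧ (∀ p ∈ l', SupIrred p) ∧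
        ∀ p ∈ l', ∀ q ∈ l', p ≠ q → p ⊔ q = l'.sup id) with hcand_def
      have hbase_cand : base ∈ cand := by
        rw [hcand_def, Finset.mem_filter]
        exact ⟨Finset.mem_univ _, Finset.Subset.refl _, hbase_irr, hbase_pair⟩
      obtain ⟨l', hl'cand, hl'max⟩ :=
        Finset.exists_max_image cand Finset.card ⟨base, hbase_cand⟩
      rw [hcand_def, Finset.mem_filter] at hl'cand
      obtain ⟨-, hl'base, hl'irr, hl'pair⟩ := hl'cand
      have hl'sup : l'.sup id = t := by
        have hc : c₁ ∈ l' := hl'base ((hbase_mem c₁).mpr (Or.inl rfl))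
        have hd : d₁ ∈ l' := hl'base ((hbase_mem d₁).mpr (Or.inr (Or.inl rfl)))
        rw [← hl'pair c₁ hc d₁ hd hcd_ne, ht₁]
      have hl'line : IsLine l' := by
        refine ⟨hl'irr, ?_, hl'pair, ?_⟩
        · calc 3 = base.card := hbase_card.symm
          _ ≤ l'.card := Finset.card_le_card hl'base
        · intro l'' hsub hirr'' hpair''
          have hmem : l'' ∈ cand := by
            rw [hcand_def, Finset.mem_filter]
            exact ⟨Finset.mem_univ _, hl'base.trans hsub, hirr'', hpair''⟩
          exact (Finset.eq_of_subset_of_card_le hsub (hl'max l'' hmem)).symm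
      -- get the Λ-line with the same top
      obtain ⟨l, ⟨hlΛ, hlsup⟩, -⟩ := hbase l' hl'line
      rw [hl'sup] at hlsup
      obtain ⟨hlirr, hlcard, hlpair, hlmax⟩ := hΛ l hlΛ
      -- a fresh element joining everything in l to t extends l: contradiction
      have extend : ∀ e : L, e ∉ l → SupIrred e → (∀ p ∈ l, p ⊔ e = t) → False := by
        intro e hel hse hpe
        have helt : e ≤ t := by
          obtain ⟨a, b, cc, ha, -, -, -, -, -⟩ :=
            Finset.two_lt_card_iff.mp (by omega : 2 < l.card)
          exact le_sup_right.trans (hpe a ha).le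
        have hsup'' : (insert e l).sup id = t := by
          rw [Finset.sup_insert, hlsup]
          exact sup_eq_right.mpr helt
        have hirr'' : ∀ p ∈ insert e l, SupIrred p := by
          intro p hp
          rcases Finset.mem_insert.mp hp with h | h
          · exact h ▸ hse
          · exact hlirr p h
        have hpair'' : ∀ p ∈ insert e l, ∀ q ∈ insert e l, p ≠ q → p ⊔ q = (insert e l).sup id := by
          intro p hp q hq hpq
          rw [hsup'']
          rcases Finset.mem_insert.mp hp with h1 | h1 <;> rcases Finset.mem_insert.mp hq with h2 | h2
          · exact absurd (h1.trans h2.symm) hpq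
          · subst h1; rw [sup_comm]; exact hpe q h2
          · subst h2; exact hpe p h1
          · rw [hlpair p h1 q h2 hpq, hlsup]
        have := hlmax (insert e l) (Finset.subset_insert e l) hirr'' hpair''
        exact hel (this ▸ Finset.mem_insert_self e l)
      -- two distinct elements of l lie in X
      have two : ∃ p ∈ l, ∃ q ∈ l, p ≠ q ∧ p ∈ X ∧ q ∈ X := by
        by_contra htwo
        push_neg at htwo
        -- every element of l outside X joins c₁ and d₁ to t
        have hjoin : ∀ q ∈ l, q ∉ X → q ⊔ c₁ = t ∧ q ⊔ d₁ = t := by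
          intro q hql hqX
          have hqirr := hlirr q hql
          have hqle : q ≤ t := hlsup ▸ Finset.le_sup (f := id) hql
          constructor
          · by_contra hne
            have hlt : c₁ ⊔ q < t := lt_of_le_of_ne (sup_le hc₁t hqle)
              (fun h => hne ((sup_comm q c₁) ▸ h))
            have hmod := sup_inf_assoc_of_le (x := c₁) d₁ (le_sup_left : c₁ ≤ c₁ ⊔ q)
            have heq : c₁ ⊔ d₁ ⊓ (c₁ ⊔ q) = c₁ ⊔ q := by
              rw [← hmod, ht₁, inf_eq_right.mpr (sup_le hc₁t hqle)]
            have hgj : good (c₁ ⊔ d₁ ⊓ (c₁ ⊔ q)) := good_sup_lt c₁ (d₁ ⊓ (c₁ ⊔ q)) hgc₁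
              (good_mono inf_le_left hgd₁) (by rw [heq]; exact hlt)
            rw [heq] at hgj
            exact hqX (hgj q hqirr le_sup_right)
          · by_contra hne
            have hlt : d₁ ⊔ q < t := lt_of_le_of_ne (sup_le hd₁t hqle)
              (fun h => hne ((sup_comm q d₁) ▸ h))
            have hmod := sup_inf_assoc_of_le (x := d₁) c₁ (le_sup_left : d₁ ≤ d₁ ⊔ q)
            have heq : d₁ ⊔ c₁ ⊓ (d₁ ⊔ q) = d₁ ⊔ q := by
              rw [← hmod, sup_comm d₁ c₁, ht₁, inf_eq_right.mpr (sup_le hd₁t hqle)]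
            have hgj : good (d₁ ⊔ c₁ ⊓ (d₁ ⊔ q)) := good_sup_lt d₁ (c₁ ⊓ (d₁ ⊔ q)) hgd₁
              (good_mono inf_le_left hgc₁) (by rw [heq]; exact hlt)
            rw [heq] at hgj
            exact hqX (hgj q hqirr le_sup_right)
        -- pick two distinct elements of l outside X
        obtain ⟨a, b, cc, ha, hb, hc, hab, hac, hbc⟩ :=
          Finset.two_lt_card_iff.mp (by omega : 2 < l.card)
        have pick : ∃ q₁ ∈ l, q₁ ∉ X := by
          by_cases haX : a ∈ X
          · by_cases hbX : b ∈ X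
            · exact absurd haX (fun _ => htwo a ha b hb hab haX hbX)
            · exact ⟨b, hb, hbX⟩
          · exact ⟨a, ha, haX⟩
        obtain ⟨q₁, hq₁l, hq₁X⟩ := pick
        obtain ⟨h1c, h1d⟩ := hjoin q₁ hq₁l hq₁X
        -- every element of l joins c₁ or d₁ to t
        have hall : ∀ p ∈ l, p ⊔ c₁ = t ∨ p ⊔ d₁ = t := by
          intro p hpl
          by_cases hpX : p ∈ X
          · have hpq : p ≠ q₁ := fun h => hq₁X (h ▸ hpX)
            have hple : p ≤ t := hlsup ▸ Finset.le_sup (f := id) hpl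
            have hpq1 : q₁ ⊔ p = t := by
              rw [sup_comm]
              rw [hlpair p hpl q₁ hq₁l hpq, hlsup]
            have hYZ : (p ⊔ c₁) ⊔ (p ⊔ d₁) = t := by
              rw [sup_sup_sup_comm, sup_idem, ← sup_assoc, sup_assoc p c₁ d₁, ht₁]
              exact sup_eq_right.mpr hple
            exact supIrred_key (hlirr q₁ hq₁l) hpq1 (le_sup_left : p ≤ p ⊔ c₁)
              (le_sup_left : p ≤ p ⊔ d₁) (sup_le hple hc₁t) (sup_le hple hd₁t) hYZ
          · exact Or.inl (hjoin p hpl hpX).1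
        by_cases hAL : ∀ p ∈ l, p ⊔ c₁ = t
        · have hc₁l : c₁ ∉ l := by
            intro h
            have := hAL c₁ h
            rw [sup_idem] at this
            exact hrnc (this ▸ hrt)
          exact extend c₁ hc₁l hsc₁ hAL
        · push_neg at hAL
          obtain ⟨p₀, hp₀l, hp₀c⟩ := hAL
          have hp₀d : p₀ ⊔ d₁ = t := (hall p₀ hp₀l).resolve_left hp₀c
          have hp₀X : p₀ ∈ X := by
            by_contra hh
            exact hp₀c (hjoin p₀ hp₀l hh).1
          have hAD : ∀ p ∈ l, p ⊔ d₁ = t := by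
            intro p hpl
            by_cases hpX : p ∈ X
            · by_cases hpp : p = p₀
              · exact hpp ▸ hp₀d
              · exact absurd hpX (fun _ => htwo p hpl p₀ hp₀l hpp hpX hp₀X)
            · exact (hjoin p hpl hpX).2
          have hd₁l : d₁ ∉ l := by
            intro h
            have := hAD d₁ h
            rw [sup_idem] at this
            exact hrnd (this ▸ hrt)
          exact extend d₁ hd₁l hsd₁ hAD
      obtain ⟨p, hpl, q, hql, hpq, hpX, hqX⟩ := two
      exact hrX (hLines l hlΛ p hpl q hql hpq hpX hqX r hr (hlsup ▸ hrt))
    -- conclude: X = J(sup X)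
    refine ⟨(Set.toFinite X).toFinset.sup id, ?_⟩
    ext p
    simp only [Set.mem_setOf_eq]
    constructor
    · intro hp
      exact ⟨hX hp, Finset.le_sup (f := id) ((Set.Finite.mem_toFinset _).mpr hp)⟩
    · rintro ⟨hp1, hp2⟩
      exact main _ ⟨(Set.toFinite X).toFinset,
        fun s hs => (Set.Finite.mem_toFinset _).mp hs, rfl⟩ p hp1 hp2
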